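/- Associativity of Heisenberg multiplication at the level of generating functions: contracting the Gaussian generating functions for multiplication in the Weyl algebra in two ways gives the same result, namely G(m^{12}_k) // G(m^{k3}_ℓ) = G(m^{23}_k) // G(m^{1k}_ℓ) = e^{(π_1+π_2+π_3) p_ℓ + (ξ_1+ξ_2+ξ_3) x_ℓ - ξ_1 π_2 - (ξ_1+ξ_2) π_3}. -/

import Mathlib

noncomputable section

/-- The multi-index factorial. -/
def mfact {J : Type*} (n : J →₀ ℕ) : ℕ := n.prod fun _ k => k.factorial

/-- The exponential `e^E = Σ_k E^k/k!` of an element `E` of `ℚ[z_τ][[ζ_σ]]` all of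
whose monomials contain at least one series variable, computed coefficientwise
(only `k ≤ |m|` contributes to the coefficient at `ζ^m`). -/
def expQ {σ τ : Type*} (E : MvPowerSeries σ (MvPolynomial τ ℚ)) :
    MvPowerSeries σ (MvPolynomial τ ℚ) :=
  fun m => ∑ k ∈ Finset.range (m.sum (fun _ e => e) + 1),
    ((k.factorial : ℚ)⁻¹) • MvPowerSeries.coeff (R := MvPolynomial τ ℚ) m (E ^ k)

/-- Contraction (composition) of generating functions `f ∈ ℚ[z_K][[ζ_J]]`,
`g ∈ ℚ[z_L][[ζ_K]]`:  `f ∥ g = (f|_{z_K ↦ ∂_{ζ_K}} · g)|_{ζ_K = 0}`. -/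
def contractGF {J K L : Type*} (f : MvPowerSeries J (MvPolynomial K ℚ))
    (g : MvPowerSeries K (MvPolynomial L ℚ)) :
    MvPowerSeries J (MvPolynomial L ℚ) :=
  fun n => ∑ m ∈ (MvPowerSeries.coeff (R := MvPolynomial K ℚ) n f).support,
    ((mfact m : ℚ) *
        MvPolynomial.coeff m (MvPowerSeries.coeff (R := MvPolynomial K ℚ) n f)) •
      MvPowerSeries.coeff (R := MvPolynomial L ℚ) m g

/-- Greek (series) variables for three input strands: `(i, false) = π_{i+1}`,
`(i, true) = ξ_{i+1}`. -/
abbrev Greek3 := Fin 3 × Bool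

/-- Variables for a two-strand object (e.g. `{k, 3}`): `(s, false) = p`-variable,
`(s, true) = x`-variable of strand `s`. -/
abbrev Two := Fin 2 × Bool

/-- series variable. -/
def Xs {σ τ : Type*} (v : σ) : MvPowerSeries σ (MvPolynomial τ ℚ) := MvPowerSeries.X v

/-- polynomial (output) variable. -/
def Cp {σ τ : Type*} (w : τ) : MvPowerSeries σ (MvPolynomial τ ℚ) :=
  MvPowerSeries.C (σ := σ) (R := MvPolynomial τ ℚ) (MvPolynomial.X w)

/-- `G(m^{12}_k ⊗ id_3)`-exponent: `(π_1+π_2)p_k + (ξ_1+ξ_2)x_k - ξ_1π_2 + π_3p_3 + ξ_3x_3`,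
where in the codomain strand `0` is `k` and strand `1` is the spectator `3`. -/
def E₁ : MvPowerSeries Greek3 (MvPolynomial Two ℚ) :=
  (Xs (0, false) + Xs (1, false)) * Cp (0, false) +
    (Xs (0, true) + Xs (1, true)) * Cp (0, true) -
    Xs (0, true) * Xs (1, false) +
    Xs (2, false) * Cp (1, false) + Xs (2, true) * Cp (1, true)

/-- `G(m^{k3}_ℓ)`-exponent: `(π_k+π_3)p_ℓ + (ξ_k+ξ_3)x_ℓ - ξ_kπ_3`
(strand `0` is `k`, strand `1` is `3`; `false = p_ℓ`, `true = x_ℓ`). -/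
def E₂ : MvPowerSeries Two (MvPolynomial Bool ℚ) :=
  (Xs (0, false) + Xs (1, false)) * Cp false +
    (Xs (0, true) + Xs (1, true)) * Cp true - Xs (0, true) * Xs (1, false)

/-- `G(id_1 ⊗ m^{23}_k)`-exponent (strand `0` is the spectator `1`, strand `1` is `k`). -/
def E₁' : MvPowerSeries Greek3 (MvPolynomial Two ℚ) :=
  Xs (0, false) * Cp (0, false) + Xs (0, true) * Cp (0, true) +
    (Xs (1, false) + Xs (2, false)) * Cp (1, false) +
    (Xs (1, true) + Xs (2, true)) * Cp (1, true) -
    Xs (1, true) * Xs (2, false)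

/-- `G(m^{1k}_ℓ)`-exponent (strand `0` is `1`, strand `1` is `k`). -/
def E₂' : MvPowerSeries Two (MvPolynomial Bool ℚ) :=
  (Xs (0, false) + Xs (1, false)) * Cp false +
    (Xs (0, true) + Xs (1, true)) * Cp true - Xs (0, true) * Xs (1, false)

/-- The associativity target exponent:
`(π_1+π_2+π_3)p_ℓ + (ξ_1+ξ_2+ξ_3)x_ℓ - ξ_1π_2 - (ξ_1+ξ_2)π_3`. -/
def E₃ : MvPowerSeries Greek3 (MvPolynomial Bool ℚ) :=
  (Xs (0, false) + Xs (1, false) + Xs (2, false)) * Cp false +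
    (Xs (0, true) + Xs (1, true) + Xs (2, true)) * Cp true -
    Xs (0, true) * Xs (1, false) -
    (Xs (0, true) + Xs (1, true)) * Xs (2, false)

set_option linter.unusedSectionVars false
set_option linter.unusedVariables false
set_option maxHeartbeats 1000000

noncomputable section

open MvPowerSeries Finset

variable {σ : Type*} [DecidableEq σ] {R : Type*} [CommRing R] [Algebra ℚ R]

def degQ {σ : Type*} (n : σ →₀ ℕ) : ℕ := n.sum fun _ e => e

lemma degQ_add {σ : Type*} (a b : σ →₀ ℕ) : degQ (a + b) = degQ a + degQ b :=
  Finsupp.sum_add_index' (fun _ => rfl) (fun _ _ _ => rfl)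

lemma degQ_eq_zero_iff {σ : Type*} (n : σ →₀ ℕ) : degQ n = 0 ↔ n = 0 := by
  constructor
  · intro h
    ext a
    by_contra ha
    have hmem : a ∈ n.support := Finsupp.mem_support_iff.2 (by simpa using ha)
    have := Finset.sum_eq_zero_iff.1 h a hmem
    simp at this
    exact ha (by simpa using this)
  · rintro rfl; simp [degQ]

def OrdGE (k : ℕ) (A : MvPowerSeries σ R) : Prop :=
  ∀ n : σ →₀ ℕ, degQ n < k → MvPowerSeries.coeff (R := R) n A = 0

lemma ordGE_zero (A : MvPowerSeries σ R) : OrdGE 0 A := fun _ h => absurd h (Nat.not_lt_zero _)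

lemma ordGE_of_le {k l : ℕ} (h : k ≤ l) {A : MvPowerSeries σ R} (hA : OrdGE l A) : OrdGE k A :=
  fun n hn => hA n (lt_of_lt_of_le hn h)

lemma ordGE_one {A : MvPowerSeries σ R} (h : MvPowerSeries.coeff (R := R) 0 A = 0) : OrdGE 1 A := by
  intro n hn
  have : n = 0 := (degQ_eq_zero_iff n).1 (Nat.lt_one_iff.mp hn)
  subst this; exact h

lemma ordGE_mul {k l : ℕ} {A B : MvPowerSeries σ R} (hA : OrdGE k A) (hB : OrdGE l B) :
    OrdGE (k + l) (A * B) := by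
  intro n hn
  rw [MvPowerSeries.coeff_mul]
  apply Finset.sum_eq_zero
  rintro ⟨a, b⟩ hab
  rw [Finset.HasAntidiagonal.mem_antidiagonal] at hab
  have hd : degQ a + degQ b < k + l := by rw [← degQ_add, hab]; exact hn
  rcases lt_or_ge (degQ a) k with h | h
  · rw [hA a h, zero_mul]
  · rw [hB b (by omega), mul_zero]

lemma ordGE_pow {A : MvPowerSeries σ R} (h : OrdGE 1 A) (k : ℕ) : OrdGE k (A ^ k) := by
  induction k with
  | zero => exact ordGE_zero _
  | succ k ih => rw [pow_succ]; exact ordGE_mul ih h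

def myExp (E : MvPowerSeries σ R) : MvPowerSeries σ R :=
  fun m => ∑ k ∈ Finset.range (degQ m + 1),
    ((k.factorial : ℚ)⁻¹) • MvPowerSeries.coeff (R := R) m (E ^ k)

lemma coeff_myExp (E : MvPowerSeries σ R) (n : σ →₀ ℕ) :
    MvPowerSeries.coeff (R := R) n (myExp E) =
      ∑ k ∈ Finset.range (degQ n + 1), ((k.factorial : ℚ)⁻¹) • MvPowerSeries.coeff (R := R) n (E ^ k) := rfl

lemma coeff_myExp_eq {E : MvPowerSeries σ R} (hE : OrdGE 1 E) {n : σ →₀ ℕ} {N : ℕ}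
    (hN : degQ n < N) :
    MvPowerSeries.coeff (R := R) n (myExp E) =
      ∑ k ∈ Finset.range N, ((k.factorial : ℚ)⁻¹) • MvPowerSeries.coeff (R := R) n (E ^ k) := by
  rw [coeff_myExp]
  apply Finset.sum_subset (Finset.range_subset_range.2 (by omega))
  intro k _ hk
  rw [Finset.mem_range, not_lt] at hk
  rw [ordGE_pow hE k n (by omega), smul_zero]

lemma myExp_zero : myExp (0 : MvPowerSeries σ R) = 1 := by
  apply MvPowerSeries.ext
  intro n
  rw [coeff_myExp, Finset.sum_eq_single 0]
  · simp
  · intro k _ hk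
    rw [zero_pow hk, map_zero, smul_zero]
  · simp

lemma coeff_pow_mul_pow_eq_zero {E F : MvPowerSeries σ R} (hE : OrdGE 1 E) (hF : OrdGE 1 F)
    {n : σ →₀ ℕ} {i j : ℕ} (h : degQ n < i + j) :
    MvPowerSeries.coeff (R := R) n (E ^ i * F ^ j) = 0 :=
  ordGE_mul (ordGE_pow hE i) (ordGE_pow hF j) n h

lemma myExp_add {E F : MvPowerSeries σ R} (hE : OrdGE 1 E) (hF : OrdGE 1 F) :
    myExp (E + F) = myExp E * myExp F := by
  apply MvPowerSeries.ext
  intro n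
  set D := degQ n with hD
  set N := D + 1 with hN
  set T : ℕ × ℕ → R := fun p =>
    ((p.1.factorial * p.2.factorial : ℚ))⁻¹ • MvPowerSeries.coeff (R := R) n (E ^ p.1 * F ^ p.2) with hT
  have hTzero : ∀ p : ℕ × ℕ, ¬ p.1 + p.2 < N → T p = 0 := by
    intro p hp
    rw [hT]
    simp only
    rw [coeff_pow_mul_pow_eq_zero hE hF (by omega), smul_zero]
  have lhs : MvPowerSeries.coeff (R := R) n (myExp (E + F)) =
      ∑ k ∈ Finset.range N, ∑ p ∈ Finset.HasAntidiagonal.antidiagonal k, T p := by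
    rw [coeff_myExp]
    apply Finset.sum_congr rfl
    intro k _
    rw [add_pow, map_sum, Finset.smul_sum, Finset.Nat.sum_antidiagonal_eq_sum_range_succ_mk]
    apply Finset.sum_congr rfl
    intro i hi
    rw [Finset.mem_range] at hi
    have hik : i ≤ k := by omega
    rw [hT]
    simp only
    rw [← map_natCast (MvPowerSeries.C (σ := σ) (R := R)) (k.choose i), MvPowerSeries.coeff_mul_C,
      show ((k.choose i : R)) = algebraMap ℚ R ((k.choose i : ℕ) : ℚ) by simp,
      mul_comm, ← Algebra.smul_def, smul_smul]
    congr 1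
    rw [Nat.cast_choose ℚ hik]
    have h1 : (k.factorial : ℚ) ≠ 0 := Nat.cast_ne_zero.2 k.factorial_ne_zero
    have h2 : (i.factorial : ℚ) ≠ 0 := Nat.cast_ne_zero.2 i.factorial_ne_zero
    have h3 : ((k - i).factorial : ℚ) ≠ 0 := Nat.cast_ne_zero.2 (k - i).factorial_ne_zero
    field_simp
  have rhs : MvPowerSeries.coeff (R := R) n (myExp E * myExp F) =
      ∑ p ∈ Finset.range N ×ˢ Finset.range N, T p := by
    rw [MvPowerSeries.coeff_mul]
    have step : ∀ q ∈ Finset.HasAntidiagonal.antidiagonal n,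
        MvPowerSeries.coeff (R := R) q.1 (myExp E) * MvPowerSeries.coeff (R := R) q.2 (myExp F) =
          ∑ p ∈ Finset.range N ×ˢ Finset.range N,
            ((p.1.factorial * p.2.factorial : ℚ))⁻¹ •
              (MvPowerSeries.coeff (R := R) q.1 (E ^ p.1) * MvPowerSeries.coeff (R := R) q.2 (F ^ p.2)) := by
      intro q hq
      rw [Finset.HasAntidiagonal.mem_antidiagonal] at hq
      have hq1 : degQ q.1 < N := by
        have := degQ_add q.1 q.2
        rw [hq] at this
        omega
      have hq2 : degQ q.2 < N := by
        have := degQ_add q.1 q.2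
        rw [hq] at this
        omega
      rw [coeff_myExp_eq hE hq1, coeff_myExp_eq hF hq2, Finset.sum_mul_sum,
        ← Finset.sum_product']
      apply Finset.sum_congr rfl
      intro p _
      rw [smul_mul_smul_comm, mul_inv]
    rw [Finset.sum_congr rfl step, Finset.sum_comm]
    apply Finset.sum_congr rfl
    intro p _
    rw [hT]
    simp only
    rw [MvPowerSeries.coeff_mul, Finset.smul_sum]
  have triangle : ∑ k ∈ Finset.range N, ∑ p ∈ Finset.HasAntidiagonal.antidiagonal k, T p =
      ∑ p ∈ Finset.range N ×ˢ Finset.range N, T p := by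
    rw [← Finset.sum_biUnion]
    · apply Finset.sum_subset
      · intro p hp
        rw [Finset.mem_biUnion] at hp
        obtain ⟨k, hk, hpk⟩ := hp
        rw [Finset.HasAntidiagonal.mem_antidiagonal] at hpk
        rw [Finset.mem_range] at hk
        rw [Finset.mem_product, Finset.mem_range, Finset.mem_range]
        omega
      · intro p _ hp
        apply hTzero
        intro hlt
        exact hp (Finset.mem_biUnion.2 ⟨p.1 + p.2, Finset.mem_range.2 hlt,
          Finset.HasAntidiagonal.mem_antidiagonal.2 rfl⟩)
    · intro a _ b _ hab
      simp only [Finset.disjoint_left]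
      intro p hpa hpb
      rw [Finset.HasAntidiagonal.mem_antidiagonal] at hpa hpb
      exact hab (hpa ▸ hpb)
  rw [lhs, rhs, triangle]

lemma ordGE_one_sum {ι : Type*} {s : Finset ι} {F : ι → MvPowerSeries σ R}
    (h : ∀ i ∈ s, OrdGE 1 (F i)) : OrdGE 1 (∑ i ∈ s, F i) := by
  apply ordGE_one
  rw [map_sum]
  exact Finset.sum_eq_zero fun i hi => h i hi 0 (by simp [degQ_eq_zero_iff])

lemma myExp_sum {ι : Type*} (s : Finset ι) (F : ι → MvPowerSeries σ R)
    (h : ∀ i ∈ s, OrdGE 1 (F i)) :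
    myExp (∑ i ∈ s, F i) = ∏ i ∈ s, myExp (F i) := by
  induction s using Finset.cons_induction with
  | empty => simpa using myExp_zero
  | cons w s hw ih =>
    rw [Finset.sum_cons, Finset.prod_cons,
      myExp_add (h w (Finset.mem_cons_self w s))
        (ordGE_one_sum fun i hi => h i (Finset.mem_cons_of_mem hi)),
      ih fun i hi => h i (Finset.mem_cons_of_mem hi)]

/-- mapping `ℚ`-coefficients into `R`-coefficients. -/
def liftQ (A : MvPowerSeries σ ℚ) : MvPowerSeries σ R :=
  MvPowerSeries.map (σ := σ) (algebraMap ℚ R) A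

lemma coeff_liftQ (A : MvPowerSeries σ ℚ) (n : σ →₀ ℕ) :
    MvPowerSeries.coeff (R := R) n (liftQ A) = algebraMap ℚ R (MvPowerSeries.coeff (R := ℚ) n A) :=
  MvPowerSeries.coeff_map _ _ _

lemma liftQ_myExp (A : MvPowerSeries σ ℚ) :
    liftQ (R := R) (myExp A) = myExp (liftQ A) := by
  apply MvPowerSeries.ext
  intro n
  rw [coeff_liftQ, coeff_myExp, coeff_myExp, map_sum]
  apply Finset.sum_congr rfl
  intro k _
  rw [smul_eq_mul, map_mul, ← Algebra.smul_def]
  congr 1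
  rw [show liftQ (R := R) A ^ k = liftQ (A ^ k) from (map_pow (MvPowerSeries.map (σ := σ) (algebraMap ℚ R)) A k).symm]
  exact (coeff_liftQ _ _).symm

section Subst

variable {τ : Type*} [Fintype τ] [DecidableEq τ]

def bnd (D : ℕ) : τ →₀ ℕ := Finsupp.equivFunOnFinite.symm fun _ => D

lemma bnd_apply (D : ℕ) (w : τ) : (bnd D) w = D := rfl

lemma le_bnd_iff {m : τ →₀ ℕ} {D : ℕ} : m ≤ bnd D ↔ ∀ w, m w ≤ D := by
  rw [Finsupp.le_def]
  exact forall_congr' fun w => Iff.rfl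

lemma degQ_eq_sum_univ (m : τ →₀ ℕ) : degQ m = ∑ w : τ, m w :=
  Finsupp.sum_fintype _ _ fun _ => rfl

lemma apply_le_degQ (m : τ →₀ ℕ) (w : τ) : m w ≤ degQ m := by
  rw [degQ_eq_sum_univ]
  exact Finset.single_le_sum (fun _ _ => Nat.zero_le _) (Finset.mem_univ w)

lemma degQ_le_of_le_bnd {m : τ →₀ ℕ} {D : ℕ} (h : m ≤ bnd D) :
    degQ m ≤ Fintype.card τ * D := by
  rw [degQ_eq_sum_univ]
  calc ∑ w : τ, m w ≤ ∑ _w : τ, D := Finset.sum_le_sum fun w _ => (le_bnd_iff.1 h) w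
  _ = Fintype.card τ * D := by simp [Finset.sum_const, mul_comm]

def cpow (c : τ → MvPowerSeries σ ℚ) (m : τ →₀ ℕ) : MvPowerSeries σ ℚ :=
  ∏ w : τ, c w ^ m w

lemma cpow_zero (c : τ → MvPowerSeries σ ℚ) : cpow c 0 = 1 := by simp [cpow]

lemma cpow_add (c : τ → MvPowerSeries σ ℚ) (m₁ m₂ : τ →₀ ℕ) :
    cpow c (m₁ + m₂) = cpow c m₁ * cpow c m₂ := by
  simp [cpow, pow_add, Finset.prod_mul_distrib]

lemma ordGE_prod_pow (c : τ → MvPowerSeries σ ℚ) (hc : ∀ w, MvPowerSeries.coeff (R := ℚ) 0 (c w) = 0)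
    (m : τ →₀ ℕ) (s : Finset τ) : OrdGE (∑ w ∈ s, m w) (∏ w ∈ s, c w ^ m w) := by
  induction s using Finset.cons_induction with
  | empty => simpa using ordGE_zero 1
  | cons w s hw ih =>
    rw [Finset.sum_cons, Finset.prod_cons]
    exact ordGE_mul (ordGE_pow (ordGE_one (hc w)) (m w)) ih

lemma ordGE_cpow (c : τ → MvPowerSeries σ ℚ) (hc : ∀ w, MvPowerSeries.coeff (R := ℚ) 0 (c w) = 0)
    (m : τ →₀ ℕ) : OrdGE (degQ m) (cpow c m) := by
  rw [degQ_eq_sum_univ]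
  exact ordGE_prod_pow c hc m Finset.univ

lemma coeff_cpow_eq_zero {c : τ → MvPowerSeries σ ℚ}
    (hc : ∀ w, MvPowerSeries.coeff (R := ℚ) 0 (c w) = 0) {m : τ →₀ ℕ} {n : σ →₀ ℕ}
    (h : degQ n < degQ m) : MvPowerSeries.coeff (R := ℚ) n (cpow c m) = 0 :=
  ordGE_cpow c hc m n h

def substC (c : τ → MvPowerSeries σ ℚ) (g : MvPowerSeries τ R) : MvPowerSeries σ R :=
  fun n => ∑ m ∈ Finset.Iic (bnd (degQ n)),
    (MvPowerSeries.coeff (R := ℚ) n (cpow c m)) • (MvPowerSeries.coeff (R := R) m g)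

lemma coeff_substC (c : τ → MvPowerSeries σ ℚ) (g : MvPowerSeries τ R) (n : σ →₀ ℕ) :
    MvPowerSeries.coeff (R := R) n (substC c g) = ∑ m ∈ Finset.Iic (bnd (degQ n)),
      (MvPowerSeries.coeff (R := ℚ) n (cpow c m)) • (MvPowerSeries.coeff (R := R) m g) := rfl

lemma coeff_substC_superset {c : τ → MvPowerSeries σ ℚ}
    (hc : ∀ w, MvPowerSeries.coeff (R := ℚ) 0 (c w) = 0) (g : MvPowerSeries τ R) (n : σ →₀ ℕ)
    {S : Finset (τ →₀ ℕ)} (hS : Finset.Iic (bnd (degQ n)) ⊆ S) :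
    MvPowerSeries.coeff (R := R) n (substC c g) = ∑ m ∈ S,
      (MvPowerSeries.coeff (R := ℚ) n (cpow c m)) • (MvPowerSeries.coeff (R := R) m g) := by
  rw [coeff_substC]
  apply Finset.sum_subset hS
  intro m _ hm
  rw [Finset.mem_Iic, le_bnd_iff] at hm
  push_neg at hm
  obtain ⟨w, hw⟩ := hm
  rw [coeff_cpow_eq_zero hc (lt_of_lt_of_le hw (apply_le_degQ m w)), zero_smul]

lemma substC_add (c : τ → MvPowerSeries σ ℚ) (g h : MvPowerSeries τ R) :
    substC c (g + h) = substC c g + substC c h := by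
  apply MvPowerSeries.ext
  intro n
  rw [map_add, coeff_substC, coeff_substC, coeff_substC, ← Finset.sum_add_distrib]
  apply Finset.sum_congr rfl
  intro m _
  rw [map_add, smul_add]

lemma substC_neg (c : τ → MvPowerSeries σ ℚ) (g : MvPowerSeries τ R) :
    substC c (-g) = -substC c g := by
  apply MvPowerSeries.ext
  intro n
  rw [map_neg, coeff_substC, coeff_substC, ← Finset.sum_neg_distrib]
  apply Finset.sum_congr rfl
  intro m _
  rw [map_neg, smul_neg]

lemma substC_sub (c : τ → MvPowerSeries σ ℚ) (g h : MvPowerSeries τ R) :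
    substC c (g - h) = substC c g - substC c h := by
  rw [sub_eq_add_neg, substC_add, substC_neg, sub_eq_add_neg]

lemma substC_one (c : τ → MvPowerSeries σ ℚ) : substC c (1 : MvPowerSeries τ R) = 1 := by
  apply MvPowerSeries.ext
  intro n
  rw [coeff_substC, Finset.sum_eq_single 0]
  · rw [cpow_zero, MvPowerSeries.coeff_one, MvPowerSeries.coeff_one, MvPowerSeries.coeff_one]
    by_cases hn : n = 0 <;> simp [hn]
  · intro m _ hm
    rw [MvPowerSeries.coeff_one, if_neg hm, smul_zero]
  · intro h
    exact absurd (Finset.mem_Iic.2 (Finsupp.le_def.2 fun w => Nat.zero_le _)) h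

lemma substC_mul (c : τ → MvPowerSeries σ ℚ)
    (hc : ∀ w, MvPowerSeries.coeff (R := ℚ) 0 (c w) = 0) (g h : MvPowerSeries τ R) :
    substC c (g * h) = substC c g * substC c h := by
  apply MvPowerSeries.ext
  intro n
  set B := bnd (τ := τ) (degQ n) with hB
  set F : (τ →₀ ℕ) × (τ →₀ ℕ) → R := fun p =>
    (MvPowerSeries.coeff (R := ℚ) n (cpow c (p.1 + p.2))) •
      (MvPowerSeries.coeff (R := R) p.1 g * MvPowerSeries.coeff (R := R) p.2 h) with hF
  have hFzero : ∀ p : (τ →₀ ℕ) × (τ →₀ ℕ), p.1 + p.2 ∉ Finset.Iic B → F p = 0 := by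
    intro p hp
    rw [Finset.mem_Iic, le_bnd_iff] at hp
    push_neg at hp
    obtain ⟨w, hw⟩ := hp
    rw [hF]
    simp only
    rw [coeff_cpow_eq_zero hc (lt_of_lt_of_le hw (apply_le_degQ _ w)), zero_smul]
  have lhs : MvPowerSeries.coeff (R := R) n (substC c (g * h)) =
      ∑ m ∈ Finset.Iic B, ∑ p ∈ Finset.HasAntidiagonal.antidiagonal m, F p := by
    rw [coeff_substC]
    apply Finset.sum_congr rfl
    intro m hm
    rw [MvPowerSeries.coeff_mul, Finset.smul_sum]
    apply Finset.sum_congr rfl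
    intro p hp
    rw [Finset.HasAntidiagonal.mem_antidiagonal] at hp
    rw [hF]
    simp only
    rw [hp]
  have rhs : MvPowerSeries.coeff (R := R) n (substC c g * substC c h) =
      ∑ p ∈ Finset.Iic B ×ˢ Finset.Iic B, F p := by
    rw [MvPowerSeries.coeff_mul]
    have step : ∀ q ∈ Finset.HasAntidiagonal.antidiagonal n,
        MvPowerSeries.coeff (R := R) q.1 (substC c g) * MvPowerSeries.coeff (R := R) q.2 (substC c h) =
          ∑ p ∈ Finset.Iic B ×ˢ Finset.Iic B,
            (MvPowerSeries.coeff (R := ℚ) q.1 (cpow c p.1) * MvPowerSeries.coeff (R := ℚ) q.2 (cpow c p.2)) •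
              (MvPowerSeries.coeff (R := R) p.1 g * MvPowerSeries.coeff (R := R) p.2 h) := by
      intro q hq
      rw [Finset.HasAntidiagonal.mem_antidiagonal] at hq
      have hq1 : degQ q.1 ≤ degQ n := by
        have := degQ_add q.1 q.2; rw [hq] at this; omega
      have hq2 : degQ q.2 ≤ degQ n := by
        have := degQ_add q.1 q.2; rw [hq] at this; omega
      have hsub1 : Finset.Iic (bnd (τ := τ) (degQ q.1)) ⊆ Finset.Iic B := by
        apply Finset.Iic_subset_Iic.2
        rw [Finsupp.le_def]; intro w; rw [bnd_apply, hB, bnd_apply]; exact hq1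
      have hsub2 : Finset.Iic (bnd (τ := τ) (degQ q.2)) ⊆ Finset.Iic B := by
        apply Finset.Iic_subset_Iic.2
        rw [Finsupp.le_def]; intro w; rw [bnd_apply, hB, bnd_apply]; exact hq2
      rw [coeff_substC_superset hc g q.1 hsub1, coeff_substC_superset hc h q.2 hsub2,
        Finset.sum_mul_sum, ← Finset.sum_product']
      apply Finset.sum_congr rfl
      intro p _
      rw [smul_mul_smul_comm]
    rw [Finset.sum_congr rfl step, Finset.sum_comm]
    apply Finset.sum_congr rfl
    intro p _
    rw [hF]
    simp only
    rw [cpow_add, MvPowerSeries.coeff_mul, Finset.sum_smul]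
  have triangle : ∑ m ∈ Finset.Iic B, ∑ p ∈ Finset.HasAntidiagonal.antidiagonal m, F p =
      ∑ p ∈ Finset.Iic B ×ˢ Finset.Iic B, F p := by
    rw [← Finset.sum_biUnion]
    · apply Finset.sum_subset
      · intro p hp
        rw [Finset.mem_biUnion] at hp
        obtain ⟨m, hm, hpm⟩ := hp
        rw [Finset.HasAntidiagonal.mem_antidiagonal] at hpm
        rw [Finset.mem_Iic] at hm
        rw [Finset.mem_product, Finset.mem_Iic, Finset.mem_Iic]
        constructor
        · exact le_trans (hpm ▸ (le_self_add : p.1 ≤ p.1 + p.2)) hm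
        · exact le_trans (hpm ▸ (le_add_self : p.2 ≤ p.1 + p.2)) hm
      · intro p _ hp
        apply hFzero
        intro hmem
        exact hp (Finset.mem_biUnion.2 ⟨p.1 + p.2, hmem, Finset.HasAntidiagonal.mem_antidiagonal.2 rfl⟩)
    · intro a _ b _ hab
      simp only [Finset.disjoint_left]
      intro p hpa hpb
      rw [Finset.HasAntidiagonal.mem_antidiagonal] at hpa hpb
      exact hab (hpa ▸ hpb)
  rw [lhs, rhs, triangle]

lemma substC_pow (c : τ → MvPowerSeries σ ℚ)
    (hc : ∀ w, MvPowerSeries.coeff (R := ℚ) 0 (c w) = 0) (g : MvPowerSeries τ R) (k : ℕ) :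
    substC c (g ^ k) = substC c g ^ k := by
  induction k with
  | zero => simpa using substC_one c
  | succ k ih => rw [pow_succ, pow_succ, substC_mul c hc, ih]

lemma substC_C (c : τ → MvPowerSeries σ ℚ) (r : R) :
    substC c (MvPowerSeries.C (σ := τ) (R := R) r) = MvPowerSeries.C (σ := σ) (R := R) r := by
  apply MvPowerSeries.ext
  intro n
  rw [coeff_substC, Finset.sum_eq_single 0]
  · rw [cpow_zero]
    by_cases hn : n = 0 <;>
      simp [hn, MvPowerSeries.coeff_C, MvPowerSeries.coeff_one]
  · intro m _ hm
    rw [MvPowerSeries.coeff_C, if_neg hm, smul_zero]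
  · intro h
    exact absurd (Finset.mem_Iic.2 (Finsupp.le_def.2 fun w => Nat.zero_le _)) h

lemma cpow_single (c : τ → MvPowerSeries σ ℚ) (u : τ) : cpow c (Finsupp.single u 1) = c u := by
  rw [cpow, Finset.prod_eq_single u]
  · simp
  · intro w _ hw
    rw [Finsupp.single_apply, if_neg (Ne.symm hw), pow_zero]
  · simp

lemma substC_X {c : τ → MvPowerSeries σ ℚ}
    (hc : ∀ w, MvPowerSeries.coeff (R := ℚ) 0 (c w) = 0) (u : τ) :
    substC c (MvPowerSeries.X u : MvPowerSeries τ R) = liftQ (c u) := by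
  apply MvPowerSeries.ext
  intro n
  rw [coeff_substC, coeff_liftQ]
  have keyterm : ∀ m ∈ Finset.Iic (bnd (τ := τ) (degQ n)),
      (MvPowerSeries.coeff (R := ℚ) n (cpow c m)) • (MvPowerSeries.coeff (R := R) m
        (MvPowerSeries.X u : MvPowerSeries τ R)) =
      if m = Finsupp.single u 1 then algebraMap ℚ R (MvPowerSeries.coeff (R := ℚ) n (c u)) else 0 := by
    intro m _
    rw [MvPowerSeries.coeff_X]
    by_cases hm : m = Finsupp.single u 1
    · rw [if_pos hm, if_pos hm, hm, cpow_single, Algebra.algebraMap_eq_smul_one]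
    · rw [if_neg hm, if_neg hm, smul_zero]
  rw [Finset.sum_congr rfl keyterm, Finset.sum_ite_eq' (Finset.Iic (bnd (degQ n)))
    (Finsupp.single u 1) (fun _ => algebraMap ℚ R (MvPowerSeries.coeff (R := ℚ) n (c u)))]
  by_cases hs : Finsupp.single u 1 ∈ Finset.Iic (bnd (τ := τ) (degQ n))
  · rw [if_pos hs]
  · rw [if_neg hs]
    rw [Finset.mem_Iic, le_bnd_iff] at hs
    push_neg at hs
    obtain ⟨w, hw⟩ := hs
    have hw' : degQ n = 0 := by
      rcases Nat.eq_zero_or_pos (degQ n) with h | h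
      · exact h
      · exfalso
        have : (Finsupp.single u 1) w ≤ 1 := by
          rw [Finsupp.single_apply]
          split <;> omega
        omega
    have hn0 : n = 0 := (degQ_eq_zero_iff n).1 hw'
    rw [hn0, hc u, map_zero]

lemma constantCoeff_substC {c : τ → MvPowerSeries σ ℚ} {g : MvPowerSeries τ R}
    (hg : MvPowerSeries.coeff (R := R) 0 g = 0) :
    MvPowerSeries.coeff (R := R) 0 (substC c g) = 0 := by
  rw [coeff_substC]
  apply Finset.sum_eq_zero
  intro m hm
  rw [Finset.mem_Iic] at hm
  have hm0 : m = 0 := by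
    apply le_antisymm _ (Finsupp.le_def.2 fun w => Nat.zero_le _)
    have : degQ (0 : σ →₀ ℕ) = 0 := by simp [degQ]
    calc m ≤ bnd (degQ (0 : σ →₀ ℕ)) := hm
    _ = 0 := by
      ext w
      rw [bnd_apply, this]
      rfl
  rw [hm0, hg, smul_zero]

lemma ordGE_one_substC {c : τ → MvPowerSeries σ ℚ} {g : MvPowerSeries τ R}
    (hg : OrdGE 1 g) : OrdGE 1 (substC c g) :=
  ordGE_one (constantCoeff_substC (hg 0 (by simp [degQ_eq_zero_iff])))

lemma substC_myExp (c : τ → MvPowerSeries σ ℚ)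
    (hc : ∀ w, MvPowerSeries.coeff (R := ℚ) 0 (c w) = 0) (g : MvPowerSeries τ R) (hg : OrdGE 1 g) :
    substC c (myExp g) = myExp (substC c g) := by
  apply MvPowerSeries.ext
  intro n
  set D := degQ n with hD
  set N := (Fintype.card τ + 1) * D + 1 with hN
  have hDN : D < N := by
    rw [hN]
    nlinarith [Nat.zero_le (Fintype.card τ * D)]
  have lhs : MvPowerSeries.coeff (R := R) n (substC c (myExp g)) =
      ∑ m ∈ Finset.Iic (bnd (τ := τ) D), ∑ k ∈ Finset.range N,
        (MvPowerSeries.coeff (R := ℚ) n (cpow c m)) •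
          (((k.factorial : ℚ)⁻¹) • MvPowerSeries.coeff (R := R) m (g ^ k)) := by
    rw [coeff_substC]
    apply Finset.sum_congr rfl
    intro m hm
    rw [Finset.mem_Iic] at hm
    have : degQ m < N := by
      have := degQ_le_of_le_bnd hm
      rw [hN]
      nlinarith [Nat.zero_le D]
    rw [coeff_myExp_eq hg this, Finset.smul_sum]
  rw [lhs, Finset.sum_comm]
  rw [coeff_myExp_eq (ordGE_one_substC hg) hDN]
  apply Finset.sum_congr rfl
  intro k _
  rw [← substC_pow c hc g k, coeff_substC, Finset.smul_sum]
  apply Finset.sum_congr rfl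
  intro m _
  rw [smul_comm]

lemma coeff_myExp_linear (cw : MvPowerSeries σ ℚ) (hcw : MvPowerSeries.coeff (R := ℚ) 0 cw = 0)
    (w : τ) {b : σ →₀ ℕ} {N : ℕ} (hN : degQ b < N) :
    MvPowerSeries.coeff (R := (MvPolynomial τ ℚ)) b (myExp (liftQ (cw) * Cp w)) =
      ∑ k ∈ Finset.range N, MvPolynomial.monomial (Finsupp.single w k)
        ((k.factorial : ℚ)⁻¹ * MvPowerSeries.coeff (R := ℚ) b (cw ^ k)) := by
  have hord : OrdGE 1 (liftQ (R := MvPolynomial τ ℚ) cw * Cp w) := by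
    apply ordGE_one
    rw [Cp, MvPowerSeries.coeff_mul_C, coeff_liftQ, hcw, map_zero, zero_mul]
  rw [coeff_myExp_eq hord hN]
  apply Finset.sum_congr rfl
  intro k _
  rw [mul_pow,
    show (Cp w : MvPowerSeries σ (MvPolynomial τ ℚ)) ^ k
        = MvPowerSeries.C (σ := σ) (R := (MvPolynomial τ ℚ)) (MvPolynomial.X w ^ k) from
      (map_pow (MvPowerSeries.C (σ := σ) (R := (MvPolynomial τ ℚ))) _ k).symm,
    MvPowerSeries.coeff_mul_C,
    show liftQ (R := MvPolynomial τ ℚ) cw ^ k = liftQ (cw ^ k) from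
      (map_pow (MvPowerSeries.map (σ := σ) (algebraMap ℚ (MvPolynomial τ ℚ))) cw k).symm,
    coeff_liftQ, MvPolynomial.algebraMap_eq, MvPolynomial.C_mul_X_pow_eq_monomial,
    MvPolynomial.smul_monomial, smul_eq_mul]

lemma sub_single_eq_erase (m : τ →₀ ℕ) (w : τ) : m - Finsupp.single w (m w) = m.erase w := by
  ext v
  rw [Finsupp.tsub_apply, Finsupp.single_apply]
  by_cases h : w = v
  · subst h; simp
  · rw [if_neg h, Finsupp.erase_ne (Ne.symm h)]
    omega

lemma support_erase_subset_iff (m : τ →₀ ℕ) (w : τ) (s : Finset τ) :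
    (m.erase w).support ⊆ s ↔ m.support ⊆ insert w s := by
  rw [Finsupp.support_erase]
  constructor
  · intro h v hv
    by_cases hvw : v = w
    · exact Finset.mem_insert.2 (Or.inl hvw)
    · exact Finset.mem_insert.2 (Or.inr (h (Finset.mem_erase.2 ⟨hvw, hv⟩)))
  · intro h v hv
    rw [Finset.mem_erase] at hv
    rcases Finset.mem_insert.1 (h hv.2) with h1 | h1
    · exact absurd h1 hv.1
    · exact h1

lemma coeff_gaussian (A : MvPowerSeries σ ℚ) (c : τ → MvPowerSeries σ ℚ)
    (hc : ∀ w, MvPowerSeries.coeff (R := ℚ) 0 (c w) = 0) (s : Finset τ) :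
    ∀ (n : σ →₀ ℕ) (m : τ →₀ ℕ),
      MvPolynomial.coeff m (MvPowerSeries.coeff (R := (MvPolynomial τ ℚ)) n
        (liftQ A * ∏ w ∈ s, myExp (liftQ (c w) * Cp w))) =
      if m.support ⊆ s then
        (∏ w ∈ s, ((m w).factorial : ℚ))⁻¹ *
          MvPowerSeries.coeff (R := ℚ) n (A * ∏ w ∈ s, c w ^ m w)
      else 0 := by
  induction s using Finset.cons_induction with
  | empty =>
    intro n m
    simp only [Finset.prod_empty, mul_one, inv_one, one_mul]
    rw [coeff_liftQ, MvPolynomial.algebraMap_eq]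
    by_cases hm : m = 0
    · subst hm; simp
    · rw [MvPolynomial.coeff_C, if_neg (fun h => hm h.symm), if_neg]
      intro hsub
      exact hm (Finsupp.support_eq_empty.1 (Finset.subset_empty.1 hsub))
  | cons w s hw ih =>
    intro n m
    have hrw : liftQ (R := MvPolynomial τ ℚ) A *
        ∏ v ∈ Finset.cons w s hw, myExp (liftQ (c v) * Cp v)
        = (liftQ A * ∏ v ∈ s, myExp (liftQ (c v) * Cp v)) * myExp (liftQ (c w) * Cp w) := by
      rw [Finset.prod_cons]; ring
    rw [hrw, MvPowerSeries.coeff_mul, MvPolynomial.coeff_sum]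
    set D := degQ n with hD
    set P : (σ →₀ ℕ) → MvPolynomial τ ℚ := fun a =>
      MvPowerSeries.coeff (R := (MvPolynomial τ ℚ)) a (liftQ A * ∏ v ∈ s, myExp (liftQ (c v) * Cp v))
      with hP
    have key : ∀ p ∈ Finset.HasAntidiagonal.antidiagonal n,
        MvPolynomial.coeff m (P p.1 *
          MvPowerSeries.coeff (R := (MvPolynomial τ ℚ)) p.2 (myExp (liftQ (c w) * Cp w))) =
        if m.support ⊆ Finset.cons w s hw then
          (∏ v ∈ Finset.cons w s hw, ((m v).factorial : ℚ))⁻¹ *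
            (MvPowerSeries.coeff (R := ℚ) p.1 (A * ∏ v ∈ s, c v ^ m v) *
             MvPowerSeries.coeff (R := ℚ) p.2 (c w ^ m w))
        else 0 := by
      intro p hp
      rw [Finset.HasAntidiagonal.mem_antidiagonal] at hp
      have hp2 : degQ p.2 < D + 1 := by
        have := degQ_add p.1 p.2; rw [hp] at this; omega
      rw [coeff_myExp_linear (c w) (hc w) w hp2, Finset.mul_sum, MvPolynomial.coeff_sum]
      have term_eq : ∀ k, MvPolynomial.coeff m (P p.1 *
          MvPolynomial.monomial (Finsupp.single w k)
            ((k.factorial : ℚ)⁻¹ * MvPowerSeries.coeff (R := ℚ) p.2 (c w ^ k)))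
          = if Finsupp.single w k ≤ m then
              MvPolynomial.coeff (m - Finsupp.single w k) (P p.1) *
                ((k.factorial : ℚ)⁻¹ * MvPowerSeries.coeff (R := ℚ) p.2 (c w ^ k))
            else 0 := fun k => MvPolynomial.coeff_mul_monomial' _ _ _ _
      rw [Finset.sum_congr rfl (fun k _ => term_eq k), Finset.sum_eq_single (m w)]
      · -- the k = m w term
        rw [if_pos (Finsupp.single_le_iff.2 le_rfl), sub_single_eq_erase, hP]
        simp only
        rw [ih p.1 (m.erase w)]
        by_cases hsupp : (m.erase w).support ⊆ s
        · have hsupp' : m.support ⊆ Finset.cons w s hw := by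
            rw [Finset.cons_eq_insert]
            exact (support_erase_subset_iff m w s).1 hsupp
          rw [if_pos hsupp, if_pos hsupp']
          have h1 : (∏ v ∈ s, (((m.erase w) v).factorial : ℚ)) =
              ∏ v ∈ s, ((m v).factorial : ℚ) := by
            apply Finset.prod_congr rfl
            intro v hv
            rw [Finsupp.erase_ne (fun h => hw (by rw [← h]; exact hv))]
          have h2 : (∏ v ∈ s, c v ^ (m.erase w) v) = ∏ v ∈ s, c v ^ m v := by
            apply Finset.prod_congr rfl
            intro v hv
            rw [Finsupp.erase_ne (fun h => hw (by rw [← h]; exact hv))]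
          rw [h1, h2, Finset.prod_cons, mul_inv]
          ring
        · have hsupp' : ¬ m.support ⊆ Finset.cons w s hw := by
            rw [Finset.cons_eq_insert]
            exact fun h => hsupp ((support_erase_subset_iff m w s).2 h)
          rw [if_neg hsupp, if_neg hsupp', zero_mul]
      · -- other k vanish
        intro k _ hkne
        by_cases hle : Finsupp.single w k ≤ m
        · rw [if_pos hle]
          have hklt : k < m w := lt_of_le_of_ne (Finsupp.single_le_iff.1 hle) hkne
          have hwsupp : w ∈ (m - Finsupp.single w k).support := by
            rw [Finsupp.mem_support_iff, Finsupp.tsub_apply, Finsupp.single_apply, if_pos rfl]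
            omega
          rw [hP]
          simp only
          rw [ih p.1 (m - Finsupp.single w k), if_neg, zero_mul]
          intro hsub
          exact hw (hsub hwsupp)
        · rw [if_neg hle]
      · -- m w out of range
        intro hmem
        rw [Finset.mem_range, not_lt] at hmem
        have : degQ p.2 < m w := by omega
        rw [if_pos (Finsupp.single_le_iff.2 le_rfl),
          ordGE_pow (ordGE_one (hc w)) (m w) p.2 this, mul_zero, mul_zero]
    rw [Finset.sum_congr rfl key]
    by_cases hsupp : m.support ⊆ Finset.cons w s hw
    · simp only [if_pos hsupp]
      rw [← Finset.mul_sum, ← MvPowerSeries.coeff_mul]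
      congr 2
      rw [Finset.prod_cons]
      ring
    · simp only [if_neg hsupp]
      rw [Finset.sum_const_zero]

lemma mfact_eq_prod (m : τ →₀ ℕ) : (mfact m : ℚ) = ∏ w : τ, ((m w).factorial : ℚ) := by
  rw [mfact, Finsupp.prod_fintype]
  · push_cast
    rfl
  · intro w
    rfl

lemma mfact_ne_zero (m : τ →₀ ℕ) : (mfact m : ℚ) ≠ 0 := by
  rw [mfact_eq_prod]
  exact Finset.prod_ne_zero_iff.2 fun w _ => Nat.cast_ne_zero.2 (Nat.factorial_ne_zero _)

lemma coeff_mul_cpow_zero (A : MvPowerSeries σ ℚ) {c : τ → MvPowerSeries σ ℚ}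
    (hc : ∀ w, MvPowerSeries.coeff (R := ℚ) 0 (c w) = 0) {m : τ →₀ ℕ} {n : σ →₀ ℕ}
    (h : degQ n < degQ m) : MvPowerSeries.coeff (R := ℚ) n (A * cpow c m) = 0 := by
  have := ordGE_mul (ordGE_zero A) (ordGE_cpow c hc m)
  exact this n (by omega)

lemma contract_gaussian {L : Type*} (A : MvPowerSeries σ ℚ) (c : τ → MvPowerSeries σ ℚ)
    (hc : ∀ w, MvPowerSeries.coeff (R := ℚ) 0 (c w) = 0)
    (g : MvPowerSeries τ (MvPolynomial L ℚ)) :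
    contractGF (liftQ A * ∏ w : τ, myExp (liftQ (c w) * Cp w)) g
      = liftQ A * substC c g := by
  apply MvPowerSeries.ext
  intro n
  set D := degQ n with hD
  set f : MvPowerSeries σ (MvPolynomial τ ℚ) :=
    liftQ A * ∏ w : τ, myExp (liftQ (c w) * Cp w) with hf
  have KG : ∀ m : τ →₀ ℕ,
      (mfact m : ℚ) * MvPolynomial.coeff m (MvPowerSeries.coeff (R := (MvPolynomial τ ℚ)) n f) =
        MvPowerSeries.coeff (R := ℚ) n (A * cpow c m) := by
    intro m
    rw [hf, coeff_gaussian A c hc Finset.univ n m,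
      if_pos (Finset.subset_univ _), ← mul_assoc, mfact_eq_prod,
      mul_inv_cancel₀ (by rw [← mfact_eq_prod]; exact mfact_ne_zero m), one_mul]
    rfl
  have hsupp : (MvPowerSeries.coeff (R := (MvPolynomial τ ℚ)) n f).support ⊆
      Finset.Iic (bnd (τ := τ) D) := by
    intro m hm
    rw [MvPolynomial.mem_support_iff] at hm
    rw [Finset.mem_Iic, le_bnd_iff]
    by_contra hcon
    push_neg at hcon
    obtain ⟨w, hw⟩ := hcon
    have hdm : D < degQ m := lt_of_lt_of_le hw (apply_le_degQ m w)
    have := KG m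
    rw [coeff_mul_cpow_zero A hc hdm] at this
    rcases mul_eq_zero.1 this with h | h
    · exact mfact_ne_zero m h
    · exact hm h
  have lhs : MvPowerSeries.coeff (R := (MvPolynomial L ℚ)) n (contractGF f g) =
      ∑ m ∈ Finset.Iic (bnd (τ := τ) D),
        (MvPowerSeries.coeff (R := ℚ) n (A * cpow c m)) • (MvPowerSeries.coeff (R := (MvPolynomial L ℚ)) m g) := by
    rw [MvPowerSeries.coeff_apply, contractGF]
    have step : ∀ m ∈ (MvPowerSeries.coeff (R := (MvPolynomial τ ℚ)) n f).support,
        ((mfact m : ℚ) * MvPolynomial.coeff m (MvPowerSeries.coeff (R := (MvPolynomial τ ℚ)) n f)) •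
            MvPowerSeries.coeff (R := (MvPolynomial L ℚ)) m g =
          (MvPowerSeries.coeff (R := ℚ) n (A * cpow c m)) • (MvPowerSeries.coeff (R := (MvPolynomial L ℚ)) m g) := by
      intro m _
      rw [KG m]
    rw [Finset.sum_congr rfl step]
    apply Finset.sum_subset hsupp
    intro m _ hm
    rw [MvPolynomial.notMem_support_iff] at hm
    rw [← KG m, hm, mul_zero, zero_smul]
  rw [lhs, MvPowerSeries.coeff_mul]
  have step2 : ∀ p ∈ Finset.HasAntidiagonal.antidiagonal n,
      MvPowerSeries.coeff (R := (MvPolynomial L ℚ)) p.1 (liftQ A) *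
        MvPowerSeries.coeff (R := (MvPolynomial L ℚ)) p.2 (substC c g) =
      ∑ m ∈ Finset.Iic (bnd (τ := τ) D),
        (MvPowerSeries.coeff (R := ℚ) p.1 A * MvPowerSeries.coeff (R := ℚ) p.2 (cpow c m)) •
          (MvPowerSeries.coeff (R := (MvPolynomial L ℚ)) m g) := by
    intro p hp
    rw [Finset.HasAntidiagonal.mem_antidiagonal] at hp
    have hq2 : degQ p.2 ≤ D := by
      have := degQ_add p.1 p.2; rw [hp] at this; omega
    have hsub2 : Finset.Iic (bnd (τ := τ) (degQ p.2)) ⊆ Finset.Iic (bnd (τ := τ) D) := by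
      apply Finset.Iic_subset_Iic.2
      rw [Finsupp.le_def]
      intro w
      rw [bnd_apply, bnd_apply]
      exact hq2
    rw [coeff_substC_superset hc g p.2 hsub2, coeff_liftQ, Finset.mul_sum]
    apply Finset.sum_congr rfl
    intro m _
    rw [Algebra.smul_def (MvPowerSeries.coeff (R := ℚ) p.2 (cpow c m)), ← mul_assoc,
      ← map_mul, ← Algebra.smul_def]
  rw [Finset.sum_congr rfl step2, Finset.sum_comm]
  apply Finset.sum_congr rfl
  intro m _
  rw [MvPowerSeries.coeff_mul, Finset.sum_smul]

lemma expQ_eq_myExp {υ : Type*} (E : MvPowerSeries σ (MvPolynomial υ ℚ)) :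
    expQ E = myExp E := rfl

lemma ordGE_one_liftQ {A : MvPowerSeries σ ℚ} (hA : MvPowerSeries.coeff (R := ℚ) 0 A = 0) :
    OrdGE 1 (liftQ (R := R) A) := by
  apply ordGE_one
  rw [coeff_liftQ, hA, map_zero]

lemma ordGE_one_liftQ_mul_Cp {cw : MvPowerSeries σ ℚ}
    (hcw : MvPowerSeries.coeff (R := ℚ) 0 cw = 0) (w : τ) :
    OrdGE 1 (liftQ (R := MvPolynomial τ ℚ) cw * Cp w) := by
  apply ordGE_one
  rw [Cp, MvPowerSeries.coeff_mul_C, coeff_liftQ, hcw, map_zero, zero_mul]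

lemma master {L : Type*} (Q : MvPowerSeries σ ℚ) (c : τ → MvPowerSeries σ ℚ)
    (hQ : MvPowerSeries.coeff (R := ℚ) 0 Q = 0) (hc : ∀ w, MvPowerSeries.coeff (R := ℚ) 0 (c w) = 0)
    (E : MvPowerSeries σ (MvPolynomial τ ℚ))
    (hE : E = liftQ Q + ∑ w : τ, liftQ (c w) * Cp w)
    (G : MvPowerSeries τ (MvPolynomial L ℚ)) (hG : OrdGE 1 G) :
    contractGF (expQ E) (expQ G) = expQ (liftQ Q + substC c G) := by
  rw [expQ_eq_myExp, expQ_eq_myExp, expQ_eq_myExp, hE]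
  rw [myExp_add (ordGE_one_liftQ hQ)
    (ordGE_one_sum fun w _ => ordGE_one_liftQ_mul_Cp (hc w) w)]
  rw [myExp_sum Finset.univ _ fun w _ => ordGE_one_liftQ_mul_Cp (hc w) w]
  rw [← liftQ_myExp]
  rw [contract_gaussian (myExp Q) c hc (myExp G)]
  rw [substC_myExp c hc G hG, liftQ_myExp,
    ← myExp_add (ordGE_one_liftQ hQ) (ordGE_one_substC hG)]

end Subst
end

noncomputable section Concrete

open MvPowerSeries

lemma coeff_zero_X {σ : Type*} (s : σ) : MvPowerSeries.coeff (R := ℚ) 0 (MvPowerSeries.X s) = 0 := by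
  rw [MvPowerSeries.coeff_zero_eq_constantCoeff_apply, MvPowerSeries.constantCoeff_X]

def c₁ : Two → MvPowerSeries Greek3 ℚ := fun w =>
  if w.1 = 0 then MvPowerSeries.X (0, w.2) + MvPowerSeries.X (1, w.2)
  else MvPowerSeries.X (2, w.2)

def Q₁ : MvPowerSeries Greek3 ℚ := -(MvPowerSeries.X (0, true) * MvPowerSeries.X (1, false))

def c₁' : Two → MvPowerSeries Greek3 ℚ := fun w =>
  if w.1 = 0 then MvPowerSeries.X (0, w.2)
  else MvPowerSeries.X (1, w.2) + MvPowerSeries.X (2, w.2)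

def Q₁' : MvPowerSeries Greek3 ℚ := -(MvPowerSeries.X (1, true) * MvPowerSeries.X (2, false))

lemma hc₁ : ∀ w, MvPowerSeries.coeff (R := ℚ) 0 (c₁ w) = 0 := by
  intro w
  rw [c₁]
  split <;> simp [coeff_zero_X]

lemma hc₁' : ∀ w, MvPowerSeries.coeff (R := ℚ) 0 (c₁' w) = 0 := by
  intro w
  rw [c₁']
  split <;> simp [coeff_zero_X]

lemma hQ₁ : MvPowerSeries.coeff (R := ℚ) 0 Q₁ = 0 := by
  rw [Q₁, MvPowerSeries.coeff_zero_eq_constantCoeff_apply]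
  simp [MvPowerSeries.constantCoeff_X]

lemma hQ₁' : MvPowerSeries.coeff (R := ℚ) 0 Q₁' = 0 := by
  rw [Q₁', MvPowerSeries.coeff_zero_eq_constantCoeff_apply]
  simp [MvPowerSeries.constantCoeff_X]

lemma hE₂ord : OrdGE 1 E₂ := by
  apply ordGE_one
  rw [MvPowerSeries.coeff_zero_eq_constantCoeff_apply]
  simp [E₂, Xs, Cp, MvPowerSeries.constantCoeff_X]

lemma hE₂'ord : OrdGE 1 E₂' := by
  apply ordGE_one
  rw [MvPowerSeries.coeff_zero_eq_constantCoeff_apply]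
  simp [E₂', Xs, Cp, MvPowerSeries.constantCoeff_X]

lemma hE₁dec : E₁ = liftQ Q₁ + ∑ w : Two, liftQ (c₁ w) * Cp w := by
  rw [Fintype.sum_prod_type, Fin.sum_univ_two, Fintype.sum_bool, Fintype.sum_bool]
  simp only [c₁, Q₁, liftQ, map_add, map_neg, map_mul, MvPowerSeries.map_X,
    Fin.isValue, ite_true, ite_false, if_pos, one_ne_zero, reduceIte]
  rw [E₁]
  unfold Xs Cp
  ring

lemma hE₁'dec : E₁' = liftQ Q₁' + ∑ w : Two, liftQ (c₁' w) * Cp w := by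
  rw [Fintype.sum_prod_type, Fin.sum_univ_two, Fintype.sum_bool, Fintype.sum_bool]
  simp only [c₁', Q₁', liftQ, map_add, map_neg, map_mul, MvPowerSeries.map_X,
    Fin.isValue, ite_true, ite_false, if_pos, one_ne_zero, reduceIte]
  rw [E₁']
  unfold Xs Cp
  ring

lemma hsubE₂ : liftQ Q₁ + substC c₁ E₂ = E₃ := by
  rw [E₂]
  unfold Xs Cp
  rw [substC_sub, substC_add, substC_mul c₁ hc₁, substC_mul c₁ hc₁, substC_mul c₁ hc₁,
    substC_add, substC_add, substC_X hc₁, substC_X hc₁, substC_X hc₁, substC_X hc₁,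
    substC_C, substC_C]
  simp only [c₁, Q₁, liftQ, map_add, map_neg, map_mul, MvPowerSeries.map_X,
    Fin.isValue, ite_true, ite_false, if_pos, one_ne_zero, reduceIte]
  rw [E₃]
  unfold Xs Cp
  ring

lemma hsubE₂' : liftQ Q₁' + substC c₁' E₂' = E₃ := by
  rw [E₂']
  unfold Xs Cp
  rw [substC_sub, substC_add, substC_mul c₁' hc₁', substC_mul c₁' hc₁', substC_mul c₁' hc₁',
    substC_add, substC_add, substC_X hc₁', substC_X hc₁', substC_X hc₁', substC_X hc₁',
    substC_C, substC_C]
  simp only [c₁', Q₁', liftQ, map_add, map_neg, map_mul, MvPowerSeries.map_X,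
    Fin.isValue, ite_true, ite_false, if_pos, one_ne_zero, reduceIte]
  rw [E₃]
  unfold Xs Cp
  ring

/-- Associativity of the Weyl-algebra multiplication at the level of
Gaussian generating functions:
`G(m^{12}_k) ∥ G(m^{k3}_ℓ) = G(m^{23}_k) ∥ G(m^{1k}_ℓ)
  = e^{(π_1+π_2+π_3)p_ℓ + (ξ_1+ξ_2+ξ_3)x_ℓ - ξ_1π_2 - (ξ_1+ξ_2)π_3}`. -/
theorem weyl_gaussian_associativity :
    contractGF (expQ E₁) (expQ E₂) = expQ E₃ ∧
      contractGF (expQ E₁') (expQ E₂') = expQ E₃ := by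
  constructor
  · rw [master Q₁ c₁ hQ₁ hc₁ E₁ hE₁dec E₂ hE₂ord, hsubE₂]
  · rw [master Q₁' c₁' hQ₁' hc₁' E₁' hE₁'dec E₂' hE₂'ord, hsubE₂']

end Concrete
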